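/- Fix an integer n ≥ 2 and a real number r with √2/2 < r < 1, and define f(d) = n(n−1)/2^d and g(d) = 1 − [(1 − r^d)(1 − (n − 1)(1 − r²)^{d/2}/2)]^n for positive integers d. Then g(d)/f(d) is asymptotically equivalent to (2r)^d/(n−1) as d → ∞, and consequently g(d)/f(d) → ∞ as d → ∞. -/

import Mathlib

open Filter

/-- **Statement 4, case 1.** For a fixed integer `n ≥ 2` and fixed
`√2/2 < r < 1`, with `f(d) = n(n-1)/2^d` (this paper's linear-separability
failure bound) and `g(d) = 1 - [(1 - r^d)(1 - (n-1)(1-r²)^{d/2}/2)]^n`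
(the Fisher-separability failure bound), the quotient `g(d)/f(d)` is
asymptotically `(2r)^d/(n-1)`, and consequently `g(d)/f(d) → ∞`. -/
theorem failure_bounds_quotient_large_r
    (n : ℕ) (hn : 2 ≤ n) (r : ℝ) (hr0 : Real.sqrt 2 / 2 < r) (hr1 : r < 1) :
    Tendsto (fun d : ℕ =>
        ((1 - ((1 - r ^ d) * (1 - ((n : ℝ) - 1) * (1 - r ^ 2) ^ ((d : ℝ) / 2) / 2)) ^ n) /
            ((n : ℝ) * ((n : ℝ) - 1) / 2 ^ d)) /
          ((2 * r) ^ d / ((n : ℝ) - 1)))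
      atTop (nhds 1) ∧
    Tendsto (fun d : ℕ =>
        (1 - ((1 - r ^ d) * (1 - ((n : ℝ) - 1) * (1 - r ^ 2) ^ ((d : ℝ) / 2) / 2)) ^ n) /
          ((n : ℝ) * ((n : ℝ) - 1) / 2 ^ d))
      atTop atTop := by
  have hsq2 : Real.sqrt 2 ^ 2 = 2 := Real.sq_sqrt (by norm_num)
  have hsq2nn : (0:ℝ) ≤ Real.sqrt 2 := Real.sqrt_nonneg 2
  have hr0' : 0 < r := by nlinarith
  have hr2 : (1:ℝ)/2 < r ^ 2 := by nlinarith
  have h1r : (0:ℝ) < 1 - r ^ 2 := by nlinarith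
  set s : ℝ := Real.sqrt (1 - r ^ 2) with hs_def
  have hs0 : 0 < s := Real.sqrt_pos.mpr h1r
  have hs_lt : s < r := by
    have : s < Real.sqrt (r ^ 2) := Real.sqrt_lt_sqrt h1r.le (by nlinarith)
    rwa [Real.sqrt_sq hr0'.le] at this
  have hn1 : (0:ℝ) < (n:ℝ) - 1 := by
    have : (2:ℝ) ≤ (n:ℝ) := by exact_mod_cast hn
    linarith
  have hnpos : (0:ℝ) < (n:ℝ) := by linarith
  have hpow : ∀ d : ℕ, (1 - r ^ 2) ^ ((d : ℝ) / 2) = s ^ d := by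
    intro d
    rw [hs_def, Real.sqrt_eq_rpow, ← Real.rpow_natCast ((1 - r ^ 2) ^ ((1:ℝ)/2)) d,
      ← Real.rpow_mul h1r.le]
    congr 1
    ring
  set b : ℕ → ℝ := fun d => ((n:ℝ) - 1) * s ^ d / 2 with hb_def
  set x : ℕ → ℝ := fun d => 1 - (1 - r ^ d) * (1 - b d) with hx_def
  -- limits of building blocks
  have ha : Tendsto (fun d : ℕ => r ^ d) atTop (nhds 0) :=
    tendsto_pow_atTop_nhds_zero_of_lt_one hr0'.le hr1
  have hsd : Tendsto (fun d : ℕ => s ^ d) atTop (nhds 0) :=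
    tendsto_pow_atTop_nhds_zero_of_lt_one hs0.le (hs_lt.trans hr1)
  have hb : Tendsto b atTop (nhds 0) := by
    have := (hsd.const_mul ((n:ℝ) - 1)).div_const 2
    simpa [hb_def] using this
  have hx0 : Tendsto x atTop (nhds 0) := by
    have h : Tendsto (fun d : ℕ => 1 - (1 - r ^ d) * (1 - b d)) atTop
        (nhds (1 - (1 - 0) * (1 - 0))) :=
      Tendsto.sub tendsto_const_nhds
        (Tendsto.mul (Tendsto.sub tendsto_const_nhds ha) (Tendsto.sub tendsto_const_nhds hb))
    simpa [hx_def] using h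
  -- positivity of x for d ≥ 1
  have hxpos : ∀ d : ℕ, 1 ≤ d → 0 < x d := by
    intro d hd
    have harp : 0 < r ^ d := pow_pos hr0' d
    have harl : r ^ d < 1 := pow_lt_one₀ hr0'.le hr1 (by omega)
    have hbp : 0 < b d := by
      have : 0 < s ^ d := pow_pos hs0 d
      simp only [hb_def]
      positivity
    simp only [hx_def]
    nlinarith [mul_pos hbp (sub_pos.mpr harl)]
  -- slope limit: (1 - (1-t)^n)/t → n as t → 0, t ≠ 0
  have hF : HasDerivAt (fun t : ℝ => 1 - (1 - t) ^ n) (n : ℝ) 0 := by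
    have h1 : HasDerivAt (fun t : ℝ => 1 - t) (-1) 0 := (hasDerivAt_id 0).const_sub 1
    have h2 : HasDerivAt (fun t : ℝ => 1 - (1 - t) ^ n) (-((n:ℝ) * (1 - 0) ^ (n - 1) * -1)) 0 :=
      (h1.fun_pow n).const_sub 1
    convert h2 using 1
    simp
  have hslope0 : Tendsto (fun t : ℝ => (1 - (1 - t) ^ n) / t) (nhdsWithin 0 {0}ᶜ)
      (nhds (n : ℝ)) := by
    have h := hasDerivAt_iff_tendsto_slope.mp hF
    refine h.congr' ?_
    filter_upwards [self_mem_nhdsWithin] with t ht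
    simp [slope_def_field, div_eq_div_iff]
  have hxne : Tendsto x atTop (nhdsWithin 0 {0}ᶜ) := by
    refine tendsto_nhdsWithin_iff.mpr ⟨hx0, ?_⟩
    filter_upwards [eventually_ge_atTop 1] with d hd
    exact (hxpos d hd).ne'
  have hslope : Tendsto (fun d : ℕ => (1 - (1 - x d) ^ n) / x d) atTop (nhds (n : ℝ)) :=
    hslope0.comp hxne
  have hratio : Tendsto (fun d : ℕ => (1 - (1 - x d) ^ n) / ((n:ℝ) * x d)) atTop (nhds 1) := by
    have := hslope.div_const (n:ℝ)
    rw [div_self hnpos.ne'] at this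
    refine this.congr fun d => ?_
    rw [div_div]
    ring_nf
  -- x d / r^d → 1
  have hq : Tendsto (fun d : ℕ => (s / r) ^ d) atTop (nhds 0) :=
    tendsto_pow_atTop_nhds_zero_of_lt_one (by positivity)
      ((div_lt_one hr0').mpr hs_lt)
  have hxa : Tendsto (fun d : ℕ => x d / r ^ d) atTop (nhds 1) := by
    have h : Tendsto (fun d : ℕ => (1 - b d) + ((n:ℝ) - 1) / 2 * (s / r) ^ d)
        atTop (nhds 1) := by
      have h' : Tendsto (fun d : ℕ => (1 - b d) + ((n:ℝ) - 1) / 2 * (s / r) ^ d)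
          atTop (nhds ((1 - 0) + ((n:ℝ) - 1) / 2 * 0)) :=
        Tendsto.add (Tendsto.sub tendsto_const_nhds hb) (Tendsto.const_mul _ hq)
      simpa using h'
    refine h.congr fun d => ?_
    have hrd : r ^ d ≠ 0 := (pow_pos hr0' d).ne'
    simp only [hx_def, hb_def, div_pow]
    field_simp
    ring
  -- main limit: g / (n r^d) → 1
  have hmain : Tendsto (fun d : ℕ => (1 - (1 - x d) ^ n) / ((n:ℝ) * r ^ d))
      atTop (nhds 1) := by
    have h := hratio.mul hxa
    rw [mul_one] at h
    refine h.congr' ?_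
    filter_upwards [eventually_ge_atTop 1] with d hd
    have hxd : x d ≠ 0 := (hxpos d hd).ne'
    have hrd : r ^ d ≠ 0 := (pow_pos hr0' d).ne'
    field_simp
  constructor
  · refine hmain.congr fun d => ?_
    have hrd : (0:ℝ) < r ^ d := pow_pos hr0' d
    have h2d : (0:ℝ) < (2:ℝ) ^ d := by positivity
    have h2r : ((2*r) ^ d : ℝ) = 2 ^ d * r ^ d := mul_pow 2 r d
    rw [hpow d]
    show (1 - (1 - x d) ^ n) / ((n:ℝ) * r ^ d)
        = (1 - ((1 - r ^ d) * (1 - b d)) ^ n) / ((n:ℝ) * ((n:ℝ) - 1) / 2 ^ d)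
          / ((2*r) ^ d / ((n:ℝ) - 1))
    have hx' : (1 : ℝ) - x d = (1 - r ^ d) * (1 - b d) := by simp [hx_def]
    rw [← hx', h2r]
    field_simp
  · have h2r1 : (1:ℝ) < 2 * r := by nlinarith
    have hpowtop : Tendsto (fun d : ℕ => (2*r) ^ d / ((n:ℝ) - 1)) atTop atTop :=
      (tendsto_pow_atTop_atTop_of_one_lt h2r1).atTop_div_const hn1
    have h := hmain.pos_mul_atTop zero_lt_one hpowtop
    refine h.congr fun d => ?_
    have hrd : (0:ℝ) < r ^ d := pow_pos hr0' d
    have h2d : (0:ℝ) < (2:ℝ) ^ d := by positivity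
    have h2r : ((2*r) ^ d : ℝ) = 2 ^ d * r ^ d := mul_pow 2 r d
    rw [hpow d]
    show (1 - (1 - x d) ^ n) / ((n:ℝ) * r ^ d) * ((2*r) ^ d / ((n:ℝ) - 1))
        = (1 - ((1 - r ^ d) * (1 - b d)) ^ n) / ((n:ℝ) * ((n:ℝ) - 1) / 2 ^ d)
    have hx' : (1 : ℝ) - x d = (1 - r ^ d) * (1 - b d) := by simp [hx_def]
    rw [← hx', h2r]
    field_simp
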